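/- Let G be a finite connected weighted graph and let p, q, s be vertices of G with p ≠ q. Then r_{G_{pq}}(p,s) = ( r(p,s)·r(q,s) − j_s(p,q)² ) / r(p,q) = j_s(p,q) + j_p(q,s)·j_q(p,s)/r(p,q) = r(p,s) − j_p(q,s)²/r(p,q), where in G_{pq} the identified vertex is written p. -/

import Mathlib

open scoped Classical

/-- A finite weighted multigraph (resistive electrical network): finitely many
vertices and edges; each edge `e` has two endpoints `ends e` and a positive
length (resistance) `len e`.  Multiple edges and self-loops are allowed. -/
structure WMG where
  V : Type
  E : Type
  instV : Fintype V
  instE : Fintype E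
  ends : E → V × V
  len : E → ℝ
  len_pos : ∀ e, 0 < len e

attribute [instance] WMG.instV WMG.instE

/-- The Moore–Penrose pseudoinverse of a real square matrix, characterized by
the four Penrose equations (it exists and is unique for real matrices). -/
noncomputable def Matrix.mpinv {n : Type} [Fintype n] (A : Matrix n n ℝ) : Matrix n n ℝ :=
  if h : ∃ B : Matrix n n ℝ,
      A * B * A = A ∧ B * A * B = B ∧ Matrix.transpose (A * B) = A * B ∧ Matrix.transpose (B * A) = B * A
  then h.choose else 0

namespace WMG

/-- Indicator function. -/
noncomputable def ind {α : Type} (x y : α) : ℝ := if x = y then 1 else 0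

/-- The weighted Laplacian: an edge `e` with endpoints `a, b` contributes
`(1/len e) * (δ_{ua} - δ_{ub}) * (δ_{va} - δ_{vb})` to the `(u,v)` entry.  So
the off-diagonal `(u,v)` entry is `-∑ 1/len e` over the edges joining `u` and
`v`, and all row sums are zero. -/
noncomputable def lap (G : WMG) : Matrix G.V G.V ℝ :=
  ∑ e : G.E, (G.len e)⁻¹ •
    Matrix.of (fun u v : G.V =>
      (ind u (G.ends e).1 - ind u (G.ends e).2) *
      (ind v (G.ends e).1 - ind v (G.ends e).2))

/-- Effective resistance `r(p,q) = L⁺pp - 2·L⁺pq + L⁺qq`. -/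
noncomputable def res (G : WMG) (p q : G.V) : ℝ :=
  G.lap.mpinv p p - 2 * G.lap.mpinv p q + G.lap.mpinv q q

/-- Voltage function `j_p(q,s) = L⁺pp - L⁺pq - L⁺ps + L⁺qs`. -/
noncomputable def volt (G : WMG) (p q s : G.V) : ℝ :=
  G.lap.mpinv p p - G.lap.mpinv p q - G.lap.mpinv p s + G.lap.mpinv q s

/-- Two vertices are adjacent if some edge has them as its endpoints. -/
def Adj (G : WMG) (u v : G.V) : Prop :=
  ∃ e : G.E, G.ends e = (u, v) ∨ G.ends e = (v, u)

/-- `u` and `v` are joined by a walk in `G`. -/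
def Reach (G : WMG) (u v : G.V) : Prop := Relation.ReflTransGen G.Adj u v

/-- `G` is connected. -/
def Connected (G : WMG) : Prop := Nonempty G.V ∧ ∀ u v : G.V, G.Reach u v

/-- Quotient graph: identify vertices along (the equivalence generated by) the
relation `r`; all edges are kept. -/
noncomputable def quot (G : WMG) (r : G.V → G.V → Prop) : WMG where
  V := Quot r
  E := G.E
  instV := Fintype.ofFinite _
  instE := G.instE
  ends e := (Quot.mk r (G.ends e).1, Quot.mk r (G.ends e).2)
  len := G.len
  len_pos := G.len_pos

/-- The canonical map from the vertices of `G` to those of a quotient of `G`. -/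
def quotMap (G : WMG) (r : G.V → G.V → Prop) : G.V → (G.quot r).V := Quot.mk r

/-- `G_{pq}`: identify the vertices `p` and `q`. -/
noncomputable def ident2 (G : WMG) (p q : G.V) : WMG :=
  G.quot (fun x y => x = p ∧ y = q)

def ident2Map (G : WMG) (p q : G.V) : G.V → (G.ident2 p q).V :=
  G.quotMap _

/-- `G_{pqs}`: identify the vertices `p`, `q`, `s` into a single vertex. -/
noncomputable def ident3 (G : WMG) (p q s : G.V) : WMG :=
  G.quot (fun x y => (x = p ∧ y = q) ∨ (x = p ∧ y = s))

/-- `G_{pq,st}`: identify `p` with `q` and, separately, `s` with `t`. -/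
noncomputable def ident22 (G : WMG) (p q s t : G.V) : WMG :=
  G.quot (fun x y => (x = p ∧ y = q) ∨ (x = s ∧ y = t))

/-- `G_S`: identify all vertices in the set `S` into a single vertex. -/
noncomputable def identSet (G : WMG) (S : Set G.V) : WMG :=
  G.quot (fun x y => x ∈ S ∧ y ∈ S)

/-- `G − e`: delete the edge `e` (keeping all vertices). -/
noncomputable def delete (G : WMG) (e : G.E) : WMG where
  V := G.V
  E := {f : G.E // f ≠ e}
  instV := G.instV
  instE := Fintype.ofFinite _
  ends f := G.ends f.1
  len f := G.len f.1
  len_pos f := G.len_pos f.1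

/-- `e` is a bridge if `G − e` is disconnected. -/
def IsBridge (G : WMG) (e : G.E) : Prop := ¬ (G.delete e).Connected

/-- `Ḡ_e`: contract the edge `e` (identify its endpoints and delete it). -/
noncomputable def contract (G : WMG) (e : G.E) : WMG :=
  (G.delete e).quot (fun x y => x = (G.ends e).1 ∧ y = (G.ends e).2)

def contractMap (G : WMG) (e : G.E) : G.V → (G.contract e).V := Quot.mk _

/-- Replace the length of the edge `e` by `L'`. -/
noncomputable def setLen (G : WMG) (e : G.E) (L' : ℝ) (hL' : 0 < L') : WMG where
  V := G.V
  E := G.E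
  instV := G.instV
  instE := G.instE
  ends := G.ends
  len f := if f = e then L' else G.len f
  len_pos f := by
    by_cases hf : f = e
    · simpa [hf] using hL'
    · simpa [hf] using G.len_pos f

/-- `T` is (the edge set of) a spanning tree of `G`: using only edges of `T`
any two vertices are joined, and `T` has (number of vertices) − 1 edges. -/
def IsSpanningTree (G : WMG) (T : Finset G.E) : Prop :=
  (∀ u v : G.V, Relation.ReflTransGen
      (fun x y => ∃ e ∈ T, G.ends e = (x, y) ∨ G.ends e = (y, x)) u v) ∧
  T.card = Fintype.card G.V - 1

/-- `t G`: the number of spanning trees of `G` (equals `1` for a one-vertex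
graph; self-loops contribute nothing). -/
noncomputable def t (G : WMG) : ℕ := Nat.card {T : Finset G.E // G.IsSpanningTree T}

/-- `t(G_{pq})`, with the convention `t(G_{pp}) = 0`. -/
noncomputable def t2 (G : WMG) (p q : G.V) : ℕ :=
  if p = q then 0 else (G.ident2 p q).t

/-- Disjoint union of two graphs. -/
noncomputable def disjUnion (G₁ G₂ : WMG) : WMG where
  V := G₁.V ⊕ G₂.V
  E := G₁.E ⊕ G₂.E
  instV := inferInstance
  instE := inferInstance
  ends := Sum.elim (fun e => (Sum.inl (G₁.ends e).1, Sum.inl (G₁.ends e).2))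
                   (fun e => (Sum.inr (G₂.ends e).1, Sum.inr (G₂.ends e).2))
  len := Sum.elim G₁.len G₂.len
  len_pos := by
    rintro (e | e)
    · exact G₁.len_pos e
    · exact G₂.len_pos e

/-- Glue `G₁` and `G₂` along two pairs of vertices (`p₁ ↔ p₂`, `q₁ ↔ q₂`):
the result is the graph `G = G₁ ∪ G₂` with `G₁ ∩ G₂ = {p, q}` (the two pieces
share exactly these two vertices and no edges). -/
noncomputable def glue2 (G₁ G₂ : WMG) (p₁ q₁ : G₁.V) (p₂ q₂ : G₂.V) : WMG :=
  (G₁.disjUnion G₂).quot (fun x y =>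
    (x = Sum.inl p₁ ∧ y = Sum.inr p₂) ∨ (x = Sum.inl q₁ ∧ y = Sum.inr q₂))

/-- Glue `G₁` and `G₂` along three pairs of vertices: the result is the graph
`G = G₁ ∪ G₂` with `G₁ ∩ G₂ = {p, q, s}`. -/
noncomputable def glue3 (G₁ G₂ : WMG) (p₁ q₁ s₁ : G₁.V) (p₂ q₂ s₂ : G₂.V) : WMG :=
  (G₁.disjUnion G₂).quot (fun x y =>
    (x = Sum.inl p₁ ∧ y = Sum.inr p₂) ∨ (x = Sum.inl q₁ ∧ y = Sum.inr q₂) ∨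
    (x = Sum.inl s₁ ∧ y = Sum.inr s₂))

/-- Disjoint union of a finite family of graphs. -/
noncomputable def sigmaGraph {k : ℕ} (G : Fin k → WMG) : WMG where
  V := Σ i, (G i).V
  E := Σ i, (G i).E
  instV := inferInstance
  instE := inferInstance
  ends e := (⟨e.1, ((G e.1).ends e.2).1⟩, ⟨e.1, ((G e.1).ends e.2).2⟩)
  len e := (G e.1).len e.2
  len_pos e := (G e.1).len_pos e.2

/-- Glue the family `G i` along a common pair of vertices (all the `p i` are
identified together, and all the `q i` are identified together): the result is
`G = ⋃ G_i` with `G_i ∩ G_j = {p, q}` for all `i ≠ j`. -/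
noncomputable def glueFam {k : ℕ} (G : Fin k → WMG) (p q : ∀ i, (G i).V) : WMG :=
  (sigmaGraph G).quot (fun x y =>
    (∃ i j, x = ⟨i, p i⟩ ∧ y = ⟨j, p j⟩) ∨ (∃ i j, x = ⟨i, q i⟩ ∧ y = ⟨j, q j⟩))

/-- The cyclic successor on `Fin k`. -/
def finSucc {k : ℕ} (i : Fin k) : Fin k :=
  ⟨(i.1 + 1) % k, Nat.mod_lt _ (Nat.lt_of_le_of_lt (Nat.zero_le _) i.2)⟩

/-- `CG_k`: replace the `i`-th edge of the cycle `C_k` by the graph `G i`,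
identifying `t i` (of `G i`) with `s (i+1)` (of `G (i+1)`), cyclically. -/
noncomputable def cycleGlue {k : ℕ} (G : Fin k → WMG) (s t : ∀ i, (G i).V) : WMG :=
  (sigmaGraph G).quot (fun x y =>
    ∃ i, x = ⟨i, t i⟩ ∧ y = ⟨finSucc i, s (finSucc i)⟩)

/-- Join a new vertex `u` (the vertex `none`) to the vertex `p i` of `H` by
`a i` parallel unit edges, for each `i`.  The resulting graph `G` has `H = G − u`,
and if `p` is injective with all `a i ≥ 1` then `N_G(u) = {p 1, …, p n}` with
`a i` parallel edges joining `u` to `p i`. -/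
noncomputable def cone (H : WMG) {n : ℕ} (p : Fin n → H.V) (a : Fin n → ℕ) : WMG where
  V := Option H.V
  E := H.E ⊕ (Σ i : Fin n, Fin (a i))
  instV := inferInstance
  instE := inferInstance
  ends := Sum.elim (fun e => (some (H.ends e).1, some (H.ends e).2))
                   (fun e => (none, some (p e.1)))
  len := Sum.elim H.len (fun _ => 1)
  len_pos := by
    rintro (e | e)
    · exact H.len_pos e
    · exact one_pos

/-- The path graph `P_n` on `n` vertices `0, 1, …, n-1`, unit edge lengths. -/
noncomputable def path (n : ℕ) : WMG where
  V := Fin n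
  E := Fin (n - 1)
  instV := inferInstance
  instE := inferInstance
  ends i := (⟨i.1, by have := i.2; omega⟩, ⟨i.1 + 1, by have := i.2; omega⟩)
  len _ := 1
  len_pos _ := one_pos

/-- The cycle graph `C_n` on `n` vertices, unit edge lengths. -/
noncomputable def cycle (n : ℕ) : WMG where
  V := Fin n
  E := Fin n
  instV := inferInstance
  instE := inferInstance
  ends i := (i, finSucc i)
  len _ := 1
  len_pos _ := one_pos

/-- The modified fan graph `F̄an_n`: the path `P_n` together with one new hub
vertex joined to each path vertex by `a` parallel edges. -/
noncomputable def fanGraph (n a : ℕ) : WMG :=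
  (path n).cone (fun i : Fin n => i) (fun _ => a)

/-- The modified wheel graph `W̄_n`: the cycle `C_n` together with one new hub
vertex joined to each cycle vertex by `a` parallel edges. -/
noncomputable def wheelGraph (n a : ℕ) : WMG :=
  (cycle n).cone (fun i : Fin n => i) (fun _ => a)

end WMG

/-- The Morgan–Voyce polynomial `B_m(x) = ∑_{k=0}^m C(m+k+1, m−k) x^k`. -/
noncomputable def morganVoyce (m : ℕ) (x : ℝ) : ℝ :=
  ∑ k ∈ Finset.range (m + 1), (Nat.choose (m + k + 1) (m - k) : ℝ) * x ^ k

/-- The polynomial `W_m(x) = ∑_{k=0}^m ((2m+2)/(m+2+k)) C(m+2+k, m−k) x^k`. -/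
noncomputable def wheelPoly (m : ℕ) (x : ℝ) : ℝ :=
  ∑ k ∈ Finset.range (m + 1),
    ((2 * m + 2 : ℝ) / (m + 2 + k : ℝ)) * (Nat.choose (m + 2 + k) (m - k) : ℝ) * x ^ k

/-- The Lucas numbers: `L₀ = 2`, `L₁ = 1`, `L_{m+2} = L_m + L_{m+1}`
(so `L₂ = 3`). -/
def lucas : ℕ → ℕ
  | 0 => 2
  | 1 => 1
  | n + 2 => lucas n + lucas (n + 1)


section Aux

open Matrix WMG

variable {V : Type} [Fintype V]

lemma ind_comm (x y : V) : ind x y = ind y x := by simp [ind, eq_comm]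

lemma sum_ind (a : V) : ∑ x : V, ind x a = 1 := by simp [ind]

lemma sum_ind_mul (a : V) (f : V → ℝ) : ∑ x : V, ind x a * f x = f a := by
  simp [ind, ite_mul]

lemma sum_mul_ind (a : V) (f : V → ℝ) : ∑ x : V, f x * ind x a = f a := by
  simp [ind, mul_ite]

lemma mulVec_combo (A : Matrix V V ℝ) (c1 c2 c3 : ℝ) (p q s u : V) :
    (A *ᵥ fun x => c1 * ind x p + c2 * ind x q + c3 * ind x s) u
      = c1 * A u p + c2 * A u q + c3 * A u s := by
  simp only [mulVec, dotProduct, mul_add, Finset.sum_add_distrib]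
  congr 1
  · congr 1
    · simp_rw [mul_comm (A u _), mul_assoc]
      rw [← Finset.mul_sum, sum_ind_mul]
    · simp_rw [mul_comm (A u _), mul_assoc]
      rw [← Finset.mul_sum, sum_ind_mul]
  · simp_rw [mul_comm (A u _), mul_assoc]
    rw [← Finset.mul_sum, sum_ind_mul]

end Aux

namespace WMG

open Matrix

lemma sum_dind_mul {V : Type} [Fintype V] (a b : V) (f : V → ℝ) :
    ∑ x : V, (ind x a - ind x b) * f x = f a - f b := by
  simp_rw [sub_mul]
  rw [Finset.sum_sub_distrib, sum_ind_mul, sum_ind_mul]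

lemma lap_mulVec (H : WMG) (x : H.V → ℝ) (u : H.V) :
    (H.lap *ᵥ x) u = ∑ e : H.E, (H.len e)⁻¹ *
      ((ind u (H.ends e).1 - ind u (H.ends e).2) * (x (H.ends e).1 - x (H.ends e).2)) := by
  simp only [lap, mulVec, dotProduct, Matrix.sum_apply, Matrix.smul_apply, Matrix.of_apply,
    smul_eq_mul, Finset.sum_mul]
  rw [Finset.sum_comm]
  refine Finset.sum_congr rfl fun e _ => ?_
  rw [← sum_dind_mul (H.ends e).1 (H.ends e).2 x, Finset.mul_sum, Finset.mul_sum]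
  exact Finset.sum_congr rfl fun v _ => by ring

lemma lap_qf (H : WMG) (x : H.V → ℝ) :
    x ⬝ᵥ (H.lap *ᵥ x) = ∑ e : H.E, (H.len e)⁻¹ *
      (x (H.ends e).1 - x (H.ends e).2) ^ 2 := by
  simp only [dotProduct, lap_mulVec, Finset.mul_sum]
  rw [Finset.sum_comm]
  refine Finset.sum_congr rfl fun e _ => ?_
  have h : ∀ u : H.V, x u * ((H.len e)⁻¹ *
      ((ind u (H.ends e).1 - ind u (H.ends e).2) * (x (H.ends e).1 - x (H.ends e).2)))
      = ((H.len e)⁻¹ * (x (H.ends e).1 - x (H.ends e).2)) *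
        ((ind u (H.ends e).1 - ind u (H.ends e).2) * x u) := fun u => by ring
  simp_rw [h, ← Finset.mul_sum, sum_dind_mul]
  ring

lemma lap_qf_nonneg (H : WMG) (x : H.V → ℝ) : 0 ≤ x ⬝ᵥ (H.lap *ᵥ x) := by
  rw [lap_qf]
  exact Finset.sum_nonneg fun e _ =>
    mul_nonneg (inv_nonneg.2 (H.len_pos e).le) (sq_nonneg _)

lemma lap_transpose (H : WMG) : H.lapᵀ = H.lap := by
  ext u v
  simp only [lap, Matrix.transpose_apply, Matrix.sum_apply, Matrix.smul_apply, Matrix.of_apply,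
    smul_eq_mul]
  exact Finset.sum_congr rfl fun e _ => by ring

lemma lap_const_of_qf_zero (H : WMG) (hH : H.Connected) (x : H.V → ℝ)
    (hx : x ⬝ᵥ (H.lap *ᵥ x) = 0) (u v : H.V) : x u = x v := by
  rw [lap_qf] at hx
  have he : ∀ e : H.E, x (H.ends e).1 = x (H.ends e).2 := by
    intro e
    have h0 := (Finset.sum_eq_zero_iff_of_nonneg (fun e _ =>
      mul_nonneg (inv_nonneg.2 (H.len_pos e).le) (sq_nonneg _))).1 hx e (Finset.mem_univ e)
    have hne : (H.len e)⁻¹ ≠ 0 := inv_ne_zero (H.len_pos e).ne'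
    have := (mul_eq_zero.1 h0).resolve_left hne
    have := pow_eq_zero_iff (n := 2) (by norm_num) |>.1 this
    linarith [sub_eq_zero.1 this]
  have hadj : ∀ a b : H.V, H.Adj a b → x a = x b := by
    rintro a b ⟨e, h | h⟩
    · have := he e; rw [h] at this; exact this
    · have := he e; rw [h] at this; exact this.symm
  have := hH.2 u v
  induction this with
  | refl => rfl
  | tail _ hbc ih => exact ih.trans (hadj _ _ hbc)

end WMG

namespace WMG

open Matrix

/-- All-ones matrix. -/
noncomputable def Jm (V : Type) [Fintype V] : Matrix V V ℝ := Matrix.of fun _ _ => 1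

lemma lap_mul_Jm (H : WMG) : H.lap * Jm H.V = 0 := by
  ext u v
  simp only [Jm, Matrix.mul_apply, Matrix.of_apply, mul_one, Matrix.zero_apply]
  calc ∑ w : H.V, H.lap u w = (H.lap *ᵥ fun _ => (1:ℝ)) u := by
        simp [mulVec, dotProduct]
    _ = 0 := by rw [lap_mulVec]; simp

lemma Jm_mul_lap (H : WMG) : Jm H.V * H.lap = 0 := by
  have := congrArg Matrix.transpose (lap_mul_Jm H)
  rwa [Matrix.transpose_mul, lap_transpose, Matrix.transpose_zero,
    show (Jm H.V)ᵀ = Jm H.V from rfl] at this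

lemma Jm_mul_Jm (V : Type) [Fintype V] :
    Jm V * Jm V = (Fintype.card V : ℝ) • Jm V := by
  ext u v
  simp [Jm, Matrix.mul_apply]

lemma Jm_mulVec {V : Type} [Fintype V] (x : V → ℝ) :
    Jm V *ᵥ x = fun _ => ∑ c : V, x c := by
  funext u
  simp [Jm, mulVec, dotProduct]

end WMG

namespace WMG

open Matrix

lemma penrose_unique {n : Type} [Fintype n] (A B : Matrix n n ℝ)
    (h1 : A * B * A = A) (h2 : B * A * B = B)
    (h3 : (A * B)ᵀ = A * B) (h4 : (B * A)ᵀ = B * A) :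
    A.mpinv = B := by
  rw [Matrix.mpinv, dif_pos ⟨B, h1, h2, h3, h4⟩]
  obtain ⟨c1, c2, c3, c4⟩ := (⟨B, h1, h2, h3, h4⟩ :
    ∃ C : Matrix n n ℝ, A * C * A = A ∧ C * A * C = C ∧
      (A * C)ᵀ = A * C ∧ (C * A)ᵀ = C * A).choose_spec
  set C := (⟨B, h1, h2, h3, h4⟩ :
    ∃ C : Matrix n n ℝ, A * C * A = A ∧ C * A * C = C ∧
      (A * C)ᵀ = A * C ∧ (C * A)ᵀ = C * A).choose with hC
  have hAC : A * C = A * B := by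
    have e1 : A * C = A * B * (A * C) := by
      conv_lhs => rw [← h1]
      rw [Matrix.mul_assoc (A * B) A C]
    have e2 : A * B * (A * C) = Bᵀ * Aᵀ * (A * C) := by
      rw [← h3, Matrix.transpose_mul]
    have e3 : Bᵀ * Aᵀ * (A * C) = Bᵀ * (Aᵀ * (A * C)) := Matrix.mul_assoc _ _ _
    have e4 : Bᵀ * (Aᵀ * (A * C)) = Bᵀ * (Aᵀ * (A * C)ᵀ) := by rw [c3]
    have e5 : Bᵀ * (Aᵀ * (A * C)ᵀ) = Bᵀ * Aᵀ := by
      rw [← Matrix.transpose_mul (A * C) A, c1]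
    have e6 : Bᵀ * Aᵀ = A * B := by rw [← Matrix.transpose_mul, h3]
    exact e1.trans (e2.trans (e3.trans (e4.trans (e5.trans e6))))
  have hCA : C * A = B * A := by
    have g : C * A * Aᵀ = Aᵀ := by
      rw [← c4, ← Matrix.transpose_mul A (C * A), ← Matrix.mul_assoc, c1]
    have f1 : C * A = C * A * (B * A) := by
      conv_lhs => rw [← h1]
      rw [Matrix.mul_assoc C A (B * A), ← Matrix.mul_assoc A B A]
    have f2 : C * A * (B * A) = C * A * (Aᵀ * Bᵀ) := by
      rw [← h4, Matrix.transpose_mul]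
    have f3 : C * A * (Aᵀ * Bᵀ) = C * A * Aᵀ * Bᵀ := (Matrix.mul_assoc _ _ _).symm
    have f4 : C * A * Aᵀ * Bᵀ = Aᵀ * Bᵀ := by rw [g]
    have f5 : Aᵀ * Bᵀ = B * A := by rw [← Matrix.transpose_mul, h4]
    exact f1.trans (f2.trans (f3.trans (f4.trans f5)))
  calc C = C * A * C := c2.symm
    _ = B * A * C := by rw [hCA]
    _ = B * (A * C) := Matrix.mul_assoc _ _ _
    _ = B * (A * B) := by rw [hAC]
    _ = B * A * B := (Matrix.mul_assoc _ _ _).symm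
    _ = B := h2

lemma lap_mpinv_spec (H : WMG) (hH : H.Connected) :
    H.lap * H.lap.mpinv = 1 - (Fintype.card H.V : ℝ)⁻¹ • Jm H.V ∧
    H.lap.mpinv * H.lap = 1 - (Fintype.card H.V : ℝ)⁻¹ • Jm H.V ∧
    H.lap.mpinvᵀ = H.lap.mpinv := by
  have hne : Nonempty H.V := hH.1
  have hn0 : (Fintype.card H.V : ℝ) ≠ 0 := Nat.cast_ne_zero.2 Fintype.card_ne_zero
  have hnpos : (0:ℝ) < (Fintype.card H.V : ℝ) := by
    exact_mod_cast Fintype.card_pos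
  set c : ℝ := (Fintype.card H.V : ℝ)⁻¹ with hc
  set M : Matrix H.V H.V ℝ := H.lap + c • Jm H.V with hM
  have hker : ∀ x : H.V → ℝ, M *ᵥ x = 0 → x = 0 := by
    intro x hx
    have h0 : x ⬝ᵥ (M *ᵥ x) = 0 := by rw [hx]; simp
    rw [hM, Matrix.add_mulVec, Matrix.smul_mulVec, dotProduct_add,
      dotProduct_smul, Jm_mulVec] at h0
    have hJ : x ⬝ᵥ (fun _ => ∑ d : H.V, x d) = (∑ d : H.V, x d) ^ 2 := by
      simp only [dotProduct, ← Finset.sum_mul]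
      ring
    rw [hJ, smul_eq_mul] at h0
    have hcpos : (0:ℝ) < c := by rw [hc]; positivity
    have h1 : x ⬝ᵥ (H.lap *ᵥ x) = 0 := by
      nlinarith [lap_qf_nonneg H x, sq_nonneg (∑ d : H.V, x d)]
    have h2 : (∑ d : H.V, x d) = 0 := by
      have hm : c * (∑ d : H.V, x d) ^ 2 = 0 := by linarith
      have hs := (mul_eq_zero.1 hm).resolve_left hcpos.ne'
      exact pow_eq_zero_iff (n := 2) (by norm_num) |>.1 hs
    have hcst := lap_const_of_qf_zero H hH x h1
    funext u
    have hsum : ∑ d : H.V, x d = (Fintype.card H.V : ℝ) * x u := by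
      rw [Finset.sum_congr rfl fun d _ => hcst d u]
      simp [mul_comm]
    rw [h2] at hsum
    have := (mul_eq_zero.1 hsum.symm).resolve_left hn0
    simpa using this
  have hinj : Function.Injective M.mulVec := by
    intro a b hab
    have h := hker (a - b) (by rw [Matrix.mulVec_sub, hab, sub_self])
    exact sub_eq_zero.1 h
  have hdet : IsUnit M.det :=
    (Matrix.isUnit_iff_isUnit_det M).1 (Matrix.mulVec_injective_iff_isUnit.1 hinj)
  have hMM : M * M⁻¹ = 1 := Matrix.mul_nonsing_inv M hdet
  have hMM' : M⁻¹ * M = 1 := Matrix.nonsing_inv_mul M hdet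
  have hMJ : M * Jm H.V = Jm H.V := by
    rw [hM, Matrix.add_mul, lap_mul_Jm, Matrix.smul_mul, Jm_mul_Jm, smul_smul,
      hc, inv_mul_cancel₀ hn0, one_smul, zero_add]
  have hJM : Jm H.V * M = Jm H.V := by
    rw [hM, Matrix.mul_add, Jm_mul_lap, Matrix.mul_smul, Jm_mul_Jm, smul_smul,
      hc, inv_mul_cancel₀ hn0, one_smul, zero_add]
  have hiJ : M⁻¹ * Jm H.V = Jm H.V := by
    conv_lhs => rw [← hMJ]
    rw [← Matrix.mul_assoc, hMM', Matrix.one_mul]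
  have hJi : Jm H.V * M⁻¹ = Jm H.V := by
    conv_lhs => rw [← hJM]
    rw [Matrix.mul_assoc, hMM, Matrix.mul_one]
  set B : Matrix H.V H.V ℝ := M⁻¹ - c • Jm H.V with hB
  have hL : H.lap = M - c • Jm H.V := by rw [hM, add_sub_cancel_right]
  have hcc : c * c * (Fintype.card H.V : ℝ) = c := by
    rw [hc]; field_simp
  have hLB : H.lap * B = 1 - c • Jm H.V := by
    rw [hL, hB, Matrix.sub_mul, Matrix.mul_sub, Matrix.mul_sub, hMM,
      Matrix.mul_smul, hMJ, Matrix.smul_mul, hJi, Matrix.smul_mul, Matrix.mul_smul,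
      Jm_mul_Jm, smul_smul, smul_smul, hcc]
    abel
  have hBL : B * H.lap = 1 - c • Jm H.V := by
    rw [hL, hB, Matrix.mul_sub, Matrix.sub_mul, Matrix.sub_mul, hMM',
      Matrix.mul_smul, hiJ, Matrix.smul_mul, hJM, Matrix.smul_mul, Matrix.mul_smul,
      Jm_mul_Jm, smul_smul, smul_smul, hcc]
    abel
  have hJB : Jm H.V * B = 0 := by
    rw [hB, Matrix.mul_sub, hJi, Matrix.mul_smul, Jm_mul_Jm, smul_smul,
      hc, inv_mul_cancel₀ hn0, one_smul, sub_self]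
  have hJT : (Jm H.V)ᵀ = Jm H.V := rfl
  have hMT : Mᵀ = M := by
    rw [hM, Matrix.transpose_add, lap_transpose, Matrix.transpose_smul, hJT]
  have hBT : Bᵀ = B := by
    rw [hB, Matrix.transpose_sub, Matrix.transpose_nonsing_inv, hMT,
      Matrix.transpose_smul, hJT]
  have p1 : H.lap * B * H.lap = H.lap := by
    rw [hLB, Matrix.sub_mul, Matrix.one_mul, Matrix.smul_mul, Jm_mul_lap,
      smul_zero, sub_zero]
  have p2 : B * H.lap * B = B := by
    rw [hBL, Matrix.sub_mul, Matrix.one_mul, Matrix.smul_mul, hJB,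
      smul_zero, sub_zero]
  have p3 : (H.lap * B)ᵀ = H.lap * B := by
    rw [hLB, Matrix.transpose_sub, Matrix.transpose_one, Matrix.transpose_smul, hJT]
  have p4 : (B * H.lap)ᵀ = B * H.lap := by
    rw [hBL, Matrix.transpose_sub, Matrix.transpose_one, Matrix.transpose_smul, hJT]
  have hmp : H.lap.mpinv = B := penrose_unique H.lap B p1 p2 p3 p4
  refine ⟨?_, ?_, ?_⟩
  · rw [hmp]; exact hLB
  · rw [hmp]; exact hBL
  · rw [hmp]; exact hBT

end WMG

namespace WMG

open Matrix

/-- If `L w = d'` exactly, then for any mean-zero `d`,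
`d ⬝ᵥ (L⁺ *ᵥ d') = d ⬝ᵥ w`. -/
lemma dot_mpinv_eq (H : WMG) (hH : H.Connected) (d d' w : H.V → ℝ)
    (hd : ∑ x : H.V, d x = 0) (hw : H.lap *ᵥ w = d') :
    d ⬝ᵥ (H.lap.mpinv *ᵥ d') = d ⬝ᵥ w := by
  obtain ⟨-, hAL, -⟩ := lap_mpinv_spec H hH
  rw [← hw, Matrix.mulVec_mulVec, hAL, Matrix.sub_mulVec, Matrix.one_mulVec,
    Matrix.smul_mulVec, Jm_mulVec, dotProduct_sub, dotProduct_smul, smul_eq_mul]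
  have : d ⬝ᵥ (fun _ => ∑ x : H.V, w x) = (∑ x : H.V, w x) * ∑ x : H.V, d x := by
    simp only [dotProduct, ← Finset.sum_mul]
    ring
  rw [this, hd, mul_zero, mul_zero, sub_zero]

/-- The `L`-image of `L⁺ *ᵥ d` for mean-zero `d` is `d` itself. -/
lemma lap_mulVec_mpinv (H : WMG) (hH : H.Connected) (d : H.V → ℝ)
    (hd : ∑ x : H.V, d x = 0) :
    H.lap *ᵥ (H.lap.mpinv *ᵥ d) = d := by
  obtain ⟨hLA, -, -⟩ := lap_mpinv_spec H hH
  rw [Matrix.mulVec_mulVec, hLA, Matrix.sub_mulVec, Matrix.one_mulVec,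
    Matrix.smul_mulVec, Jm_mulVec, hd]
  funext u
  simp

lemma res_eq_dot (H : WMG) (hH : H.Connected) (a b : H.V) :
    H.res a b = (fun x => ind x a - ind x b) ⬝ᵥ
      (H.lap.mpinv *ᵥ fun x => ind x a - ind x b) := by
  obtain ⟨-, -, hAT⟩ := lap_mpinv_spec H hH
  have hS : H.lap.mpinv b a = H.lap.mpinv a b := by
    conv_lhs => rw [← hAT]
    rfl
  have hmv : ∀ u : H.V, (H.lap.mpinv *ᵥ fun x => ind x a - ind x b) u
      = H.lap.mpinv u a - H.lap.mpinv u b := by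
    intro u
    show ∑ x : H.V, H.lap.mpinv u x * (ind x a - ind x b) = _
    simp_rw [mul_sub]
    rw [Finset.sum_sub_distrib, sum_mul_ind, sum_mul_ind]
  rw [show ((fun x => ind x a - ind x b) ⬝ᵥ (H.lap.mpinv *ᵥ fun x => ind x a - ind x b))
      = ∑ x : H.V, (ind x a - ind x b) *
        (H.lap.mpinv x a - H.lap.mpinv x b) from
    Finset.sum_congr rfl fun x _ => by rw [hmv]]
  rw [sum_dind_mul]
  rw [res, hS]
  ring

lemma res_ne_zero (H : WMG) (hH : H.Connected) (a b : H.V) (hab : a ≠ b) :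
    H.res a b ≠ 0 := by
  intro h0
  have hdsum : ∑ x : H.V, (ind x a - ind x b) = 0 := by
    simp_rw [Finset.sum_sub_distrib, sum_ind, sub_self]
  have hLy : H.lap *ᵥ (H.lap.mpinv *ᵥ fun x => ind x a - ind x b)
      = fun x => ind x a - ind x b :=
    lap_mulVec_mpinv H hH _ hdsum
  have hqf : (H.lap.mpinv *ᵥ fun x => ind x a - ind x b) ⬝ᵥ
      (H.lap *ᵥ (H.lap.mpinv *ᵥ fun x => ind x a - ind x b)) = 0 := by
    rw [hLy, dotProduct_comm, ← res_eq_dot H hH a b]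
    exact h0
  have hcst := lap_const_of_qf_zero H hH _ hqf
  have hz : (fun x => ind x a - ind x b) = (0 : H.V → ℝ) := by
    rw [← hLy]
    funext u
    rw [lap_mulVec]
    refine Finset.sum_eq_zero fun e _ => ?_
    rw [hcst (H.ends e).1 (H.ends e).2]
    simp
  have := congrFun hz a
  simp [ind, hab] at this

lemma ident2_connected (G : WMG) (hG : G.Connected) (p q : G.V) :
    (G.ident2 p q).Connected := by
  constructor
  · exact ⟨G.ident2Map p q hG.1.some⟩
  · intro u v
    induction u using Quot.ind with | _ x =>
    induction v using Quot.ind with | _ y =>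
    have hxy := hG.2 x y
    induction hxy with
    | refl => exact Relation.ReflTransGen.refl
    | tail _ hbc ih =>
        refine ih.tail ?_
        obtain ⟨e, h | h⟩ := hbc
        · exact ⟨e, Or.inl (by
            show (Quot.mk _ (G.ends e).1, Quot.mk _ (G.ends e).2) = _
            rw [h]; rfl)⟩
        · exact ⟨e, Or.inr (by
            show (Quot.mk _ (G.ends e).1, Quot.mk _ (G.ends e).2) = _
            rw [h]; rfl)⟩

lemma quot_lap_mulVec (G : WMG) (r : G.V → G.V → Prop)
    (w : (G.quot r).V → ℝ) (c : (G.quot r).V) :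
    ((G.quot r).lap *ᵥ w) c
      = ∑ x : G.V, ind (Quot.mk r x) c * ((G.lap *ᵥ fun y => w (Quot.mk r y)) x) := by
  rw [lap_mulVec]
  have hrhs : ∀ x : G.V, ind (Quot.mk r x) c * ((G.lap *ᵥ fun y => w (Quot.mk r y)) x)
      = ∑ e : G.E, (G.len e)⁻¹ * (ind (Quot.mk r x) c *
          ((ind x (G.ends e).1 - ind x (G.ends e).2) *
            (w (Quot.mk r (G.ends e).1) - w (Quot.mk r (G.ends e).2)))) := by
    intro x
    rw [lap_mulVec, Finset.mul_sum]
    exact Finset.sum_congr rfl fun e _ => by ring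
  rw [Finset.sum_congr rfl fun x _ => hrhs x, Finset.sum_comm]
  refine Finset.sum_congr rfl fun e _ => ?_
  have hfib : ∀ a : G.V, ∑ x : G.V, ind (Quot.mk r x) c * ind x a = ind (Quot.mk r a) c :=
    fun a => sum_mul_ind a fun x => ind (Quot.mk r x) c
  have : ∑ x : G.V, (G.len e)⁻¹ * (ind (Quot.mk r x) c *
      ((ind x (G.ends e).1 - ind x (G.ends e).2) *
        (w (Quot.mk r (G.ends e).1) - w (Quot.mk r (G.ends e).2))))
      = (G.len e)⁻¹ * ((w (Quot.mk r (G.ends e).1) - w (Quot.mk r (G.ends e).2)) *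
          ∑ x : G.V, (ind (Quot.mk r x) c * ind x (G.ends e).1
            - ind (Quot.mk r x) c * ind x (G.ends e).2)) := by
    rw [Finset.mul_sum, Finset.mul_sum]
    exact Finset.sum_congr rfl fun x _ => by ring
  rw [this, Finset.sum_sub_distrib, hfib, hfib]
  have hends : (G.quot r).ends e
      = (Quot.mk r (G.ends e).1, Quot.mk r (G.ends e).2) := rfl
  rw [hends]
  rw [ind_comm c, ind_comm c]
  simp only [show (G.quot r).len = G.len from rfl]
  ac_rfl

end WMG

namespace WMG

open Matrix

lemma ident2_lap_mulVec (G : WMG) (p q : G.V) (w : (G.ident2 p q).V → ℝ)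
    (c : (G.ident2 p q).V) :
    ((G.ident2 p q).lap *ᵥ w) c
      = ∑ x : G.V, ind (G.ident2Map p q x) c *
          ((G.lap *ᵥ fun y => w (G.ident2Map p q y)) x) :=
  quot_lap_mulVec G _ w c

end WMG

open Matrix WMG

/-- For a finite connected weighted graph `G` and vertices `p ≠ q`, `s`:
`r_{G_{pq}}(p,s) = (r(p,s) r(q,s) - j_s(p,q)²)/r(p,q)
               = j_s(p,q) + j_p(q,s) j_q(p,s)/r(p,q)
               = r(p,s) - j_p(q,s)²/r(p,q)`,
where in `G_{pq}` the identified vertex is written `p`. -/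
theorem res_of_two_vertex_identification (G : WMG) (hG : G.Connected)
    (p q s : G.V) (hpq : p ≠ q) :
    (G.ident2 p q).res (G.ident2Map p q p) (G.ident2Map p q s) =
        (G.res p s * G.res q s - G.volt s p q ^ 2) / G.res p q ∧
    (G.ident2 p q).res (G.ident2Map p q p) (G.ident2Map p q s) =
        G.volt s p q + G.volt p q s * G.volt q p s / G.res p q ∧
    (G.ident2 p q).res (G.ident2Map p q p) (G.ident2Map p q s) =
        G.res p s - G.volt p q s ^ 2 / G.res p q := by
  have hrpq : G.res p q ≠ 0 := res_ne_zero G hG p q hpq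
  obtain ⟨-, -, hAT⟩ := lap_mpinv_spec G hG
  have hS : ∀ i j : G.V, G.lap.mpinv j i = G.lap.mpinv i j := by
    intro i j
    conv_lhs => rw [← hAT]
    rfl
  set t : ℝ := -(G.volt p q s) / G.res p q with ht
  set v : G.V → ℝ := fun x => (1 + t) * ind x p + (-t) * ind x q + (-1) * ind x s with hv
  have hvsum : ∑ x : G.V, v x = 0 := by
    simp only [hv]
    rw [Finset.sum_add_distrib, Finset.sum_add_distrib, ← Finset.mul_sum, ← Finset.mul_sum,
      ← Finset.mul_sum, sum_ind, sum_ind, sum_ind]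
    ring
  set u : G.V → ℝ := G.lap.mpinv *ᵥ v with hu
  have hLu : G.lap *ᵥ u = v := lap_mulVec_mpinv G hG v hvsum
  have huval : ∀ x : G.V, u x = (1 + t) * G.lap.mpinv x p + (-t) * G.lap.mpinv x q
      + (-1) * G.lap.mpinv x s := by
    intro x
    rw [hu, hv]
    exact mulVec_combo G.lap.mpinv (1 + t) (-t) (-1) p q s x
  have hkey : G.volt p q s + t * G.res p q = 0 := by
    rw [ht]
    field_simp
    ring
  have hupq : u p = u q := by
    rw [huval p, huval q, hS p q]
    simp only [volt, res] at hkey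
    linear_combination hkey
  have hw : ∀ x y : G.V, (x = p ∧ y = q) → u x = u y := by
    rintro x y ⟨rfl, rfl⟩
    exact hupq
  set w : (G.ident2 p q).V → ℝ := Quot.lift u hw with hwdef
  have hpqq : G.ident2Map p q q = G.ident2Map p q p := (Quot.sound ⟨rfl, rfl⟩).symm
  have hG'conn : (G.ident2 p q).Connected := ident2_connected G hG p q
  set d : (G.ident2 p q).V → ℝ :=
    fun c => ind c (G.ident2Map p q p) - ind c (G.ident2Map p q s) with hd
  have hdsum : ∑ c : (G.ident2 p q).V, d c = 0 := by
    simp only [hd]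
    rw [Finset.sum_sub_distrib, sum_ind, sum_ind, sub_self]
  have hfib : ∀ (c : (G.ident2 p q).V) (a : G.V),
      ∑ x : G.V, ind (G.ident2Map p q x) c * ind x a = ind (G.ident2Map p q a) c :=
    fun c a => sum_mul_ind a fun x => ind (G.ident2Map p q x) c
  have hLw : (G.ident2 p q).lap *ᵥ w = d := by
    funext c
    rw [ident2_lap_mulVec G p q w c]
    have hLu' : (G.lap *ᵥ fun y => w (G.ident2Map p q y)) = v := hLu
    rw [hLu']
    have hexp : ∀ x : G.V, ind (G.ident2Map p q x) c * v x
        = (1 + t) * (ind (G.ident2Map p q x) c * ind x p)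
          + (-t) * (ind (G.ident2Map p q x) c * ind x q)
          + (-1) * (ind (G.ident2Map p q x) c * ind x s) := by
      intro x
      rw [hv]
      ring
    rw [Finset.sum_congr rfl fun x _ => hexp x, Finset.sum_add_distrib,
      Finset.sum_add_distrib, ← Finset.mul_sum, ← Finset.mul_sum, ← Finset.mul_sum,
      hfib c p, hfib c q, hfib c s, hpqq]
    simp only [hd]
    rw [ind_comm c (G.ident2Map p q p), ind_comm c (G.ident2Map p q s)]
    ring
  have hres' : (G.ident2 p q).res (G.ident2Map p q p) (G.ident2Map p q s)
      = d ⬝ᵥ ((G.ident2 p q).lap.mpinv *ᵥ d) := by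
    rw [hd]
    exact res_eq_dot (G.ident2 p q) hG'conn _ _
  have hdot : d ⬝ᵥ ((G.ident2 p q).lap.mpinv *ᵥ d) = d ⬝ᵥ w :=
    dot_mpinv_eq (G.ident2 p q) hG'conn d d w hdsum hLw
  have hdw : d ⬝ᵥ w = u p - u s := by
    simp only [hd, dotProduct]
    rw [sum_dind_mul (G.ident2Map p q p) (G.ident2Map p q s) w]
    rfl
  have hups : u p - u s = G.res p s + t * G.volt p q s := by
    rw [huval p, huval s, hS p s, hS q s]
    simp only [res, volt]
    ring
  have hmain : (G.ident2 p q).res (G.ident2Map p q p) (G.ident2Map p q s)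
      = G.res p s - G.volt p q s ^ 2 / G.res p q := by
    rw [hres', hdot, hdw, hups, ht]
    field_simp
    ring
  have hvpvq : G.res p q = G.volt p q s + G.volt q p s := by
    simp only [res, volt]
    linarith [hS p q, hS p s, hS q s]
  have hvs : G.res p s = G.volt p q s + G.volt s p q := by
    simp only [res, volt]
    linarith [hS p q, hS p s, hS q s]
  have hqs : G.res q s = G.volt q p s + G.volt s p q := by
    simp only [res, volt]
    linarith [hS p q, hS p s, hS q s]
  rw [hvpvq] at hrpq
  refine ⟨?_, ?_, ?_⟩ <;> rw [hmain]
  · rw [hvs, hqs, hvpvq]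
    field_simp
    ring
  · rw [hvs, hvpvq]
    field_simp
    ring
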